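/- Let A₁, A₂, A₃ be the 6×6 integer matrices with rows A₁ = [[1,0,0,0,0,0],[0,1,0,0,0,0],[0,0,1,0,0,0],[1,1,0,5,0,0],[2,0,1,0,5,0],[1,2,1,0,0,5]], A₂ = [[1,0,0,0,0,0],[0,1,0,0,0,0],[0,0,1,0,0,0],[2,1,0,5,0,0],[0,1,1,0,5,0],[3,2,1,0,0,5]], A₃ = [[1,0,0,0,0,0],[0,1,0,0,0,0],[0,0,1,0,0,0],[2,1,0,5,0,0],[0,1,1,0,5,0],[2,3,1,0,0,5]], and let Qᵢ = AᵢᵀAᵢ. Then for every integer t ≥ 0 and all i, j ∈ {1,2,3}, the representation numbers satisfy R(Qᵢ,t) = R(Qⱼ,t); equivalently, the lattices Lᵢ = Aᵢℤ⁶ are mutually isospectral. -/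
import Mathlib

open Matrix

/-- the three `6 × 6` basis matrices `A₁, A₂, A₃` of the lattice triple. -/
def paperA : Fin 3 → Matrix (Fin 6) (Fin 6) ℤ :=
  ![!![1,0,0,0,0,0; 0,1,0,0,0,0; 0,0,1,0,0,0; 1,1,0,5,0,0; 2,0,1,0,5,0; 1,2,1,0,0,5],
    !![1,0,0,0,0,0; 0,1,0,0,0,0; 0,0,1,0,0,0; 2,1,0,5,0,0; 0,1,1,0,5,0; 3,2,1,0,0,5],
    !![1,0,0,0,0,0; 0,1,0,0,0,0; 0,0,1,0,0,0; 2,1,0,5,0,0; 0,1,1,0,5,0; 2,3,1,0,0,5]]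

section Aux

/- vector entry evaluation lemmas (both numeral and `Fin.mk` index forms) -/
variable {R : Type*}
lemma stcv0 (a b c d e f : R) : ![a,b,c,d,e,f] 0 = a := rfl
lemma stcv1 (a b c d e f : R) : ![a,b,c,d,e,f] 1 = b := rfl
lemma stcv2 (a b c d e f : R) : ![a,b,c,d,e,f] 2 = c := rfl
lemma stcv3 (a b c d e f : R) : ![a,b,c,d,e,f] 3 = d := rfl
lemma stcv4 (a b c d e f : R) : ![a,b,c,d,e,f] 4 = e := rfl
lemma stcv5 (a b c d e f : R) : ![a,b,c,d,e,f] 5 = f := rfl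
lemma stcm0 (a b c d e f : R) {h} : ![a,b,c,d,e,f] ⟨0,h⟩ = a := rfl
lemma stcm1 (a b c d e f : R) {h} : ![a,b,c,d,e,f] ⟨1,h⟩ = b := rfl
lemma stcm2 (a b c d e f : R) {h} : ![a,b,c,d,e,f] ⟨2,h⟩ = c := rfl
lemma stcm3 (a b c d e f : R) {h} : ![a,b,c,d,e,f] ⟨3,h⟩ = d := rfl
lemma stcm4 (a b c d e f : R) {h} : ![a,b,c,d,e,f] ⟨4,h⟩ = e := rfl
lemma stcm5 (a b c d e f : R) {h} : ![a,b,c,d,e,f] ⟨5,h⟩ = f := rfl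

lemma stmk0 {h} : (⟨0,h⟩ : Fin 6) = 0 := rfl
lemma stmk1 {h} : (⟨1,h⟩ : Fin 6) = 1 := rfl
lemma stmk2 {h} : (⟨2,h⟩ : Fin 6) = 2 := rfl
lemma stmk3 {h} : (⟨3,h⟩ : Fin 6) = 3 := rfl
lemma stmk4 {h} : (⟨4,h⟩ : Fin 6) = 4 := rfl
lemma stmk5 {h} : (⟨5,h⟩ : Fin 6) = 5 := rfl

lemma stdp6 [CommRing R] (a b c d e f : R) (x : Fin 6 → R) :
    ![a,b,c,d,e,f] ⬝ᵥ x = a*x 0 + b*x 1 + c*x 2 + d*x 3 + e*x 4 + f*x 5 := by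
  simp only [dotProduct, Fin.sum_univ_six, stcv0, stcv1, stcv2, stcv3, stcv4, stcv5]

lemma stquad (A : Matrix (Fin 6) (Fin 6) ℤ) (x : Fin 6 → ℤ) :
    x ⬝ᵥ (Aᵀ * A).mulVec x = (A.mulVec x) ⬝ᵥ (A.mulVec x) := by
  rw [← Matrix.mulVec_mulVec, Matrix.dotProduct_mulVec, Matrix.vecMul_transpose]

/- signed permutations -/
abbrev SPerm := (Fin 6 → Bool) × (Fin 6 → Fin 6)

def tA12 : Fin 5 → Fin 5 → Fin 5 → SPerm :=
![
  ![![(![true,true,true,true,true,true], ![0,1,2,3,4,5]), (![true,true,true,true,true,true], ![0,1,2,3,4,5]), (![true,true,true,true,true,true], ![0,1,2,3,4,5]), (![true,true,true,true,true,true], ![0,1,2,3,4,5]), (![true,true,true,true,true,true], ![0,1,2,3,4,5])],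
    ![(![true,true,true,false,true,true], ![5,0,2,1,4,3]), (![true,true,true,false,true,false], ![1,0,2,5,3,4]), (![true,true,true,false,true,false], ![0,1,3,5,2,4]), (![true,false,true,false,true,true], ![1,2,4,3,0,5]), (![true,true,true,true,true,true], ![1,2,0,3,4,5])],
    ![(![false,true,true,true,true,false], ![5,0,2,1,4,3]), (![true,false,true,true,false,false], ![2,1,0,5,3,4]), (![true,true,true,false,true,false], ![1,0,2,5,3,4]), (![true,true,true,true,true,true], ![1,2,0,3,4,5]), (![true,true,true,false,true,false], ![0,1,3,5,2,4])],
    ![(![false,true,true,true,true,false], ![5,0,2,1,4,3]), (![true,false,false,false,true,false], ![0,1,2,3,4,5]), (![true,true,true,true,true,true], ![1,2,0,3,4,5]), (![false,false,true,false,true,true], ![1,2,3,5,0,4]), (![false,true,false,true,true,false], ![2,1,3,0,5,4])],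
    ![(![true,true,true,false,true,true], ![5,0,2,1,4,3]), (![true,true,true,true,true,true], ![1,2,0,3,4,5]), (![true,false,true,true,false,false], ![2,1,0,5,3,4]), (![true,false,false,false,true,false], ![0,1,2,3,4,5]), (![false,false,true,false,true,true], ![1,2,3,5,0,4])]],
  ![![(![true,true,true,true,true,true], ![1,0,2,3,5,4]), (![true,false,true,false,true,true], ![1,0,4,2,5,3]), (![true,false,false,true,false,false], ![1,0,3,4,2,5]), (![true,true,true,true,true,true], ![1,0,2,3,5,4]), (![true,true,true,true,true,true], ![1,0,2,3,5,4])],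
    ![(![true,false,true,false,false,false], ![2,3,0,4,1,5]), (![true,true,true,false,false,false], ![0,1,2,3,4,5]), (![true,true,false,true,true,true], ![0,5,1,2,4,3]), (![false,true,true,false,true,true], ![2,4,0,1,5,3]), (![true,true,true,false,true,false], ![0,3,5,1,2,4])],
    ![(![true,true,true,false,true,false], ![2,1,5,3,4,0]), (![true,true,false,true,false,true], ![0,2,1,3,5,4]), (![true,false,true,false,true,true], ![0,4,1,2,3,5]), (![true,true,false,false,true,false], ![1,2,3,5,4,0]), (![true,true,true,true,false,true], ![0,2,1,4,5,3])],
    ![(![true,true,false,false,true,true], ![2,1,4,5,0,3]), (![true,false,true,true,true,true], ![0,1,2,3,4,5]), (![true,true,true,false,true,true], ![0,3,1,4,2,5]), (![false,true,true,true,true,false], ![1,0,3,4,5,2]), (![true,false,true,true,true,true], ![0,1,2,3,4,5])],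
    ![(![true,false,true,true,true,false], ![2,0,3,1,5,4]), (![true,false,false,true,true,true], ![3,0,4,1,2,5]), (![true,true,false,true,true,true], ![0,1,4,5,3,2]), (![false,false,false,false,true,true], ![2,0,1,5,3,4]), (![true,true,true,true,true,true], ![0,1,2,4,5,3])]],
  ![![(![true,true,false,true,false,true], ![1,0,4,3,5,2]), (![true,false,true,false,true,true], ![1,0,4,3,5,2]), (![true,true,false,true,false,false], ![4,1,0,2,3,5]), (![true,true,true,true,true,true], ![1,0,2,3,5,4]), (![false,true,true,false,true,false], ![2,0,1,5,3,4])],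
    ![(![true,true,false,true,false,true], ![0,1,4,2,3,5]), (![false,true,false,false,true,true], ![0,1,2,3,4,5]), (![true,true,true,true,true,true], ![0,2,1,4,3,5]), (![true,false,true,true,true,true], ![0,1,2,3,4,5]), (![true,false,false,true,true,false], ![0,3,4,1,2,5])],
    ![(![true,false,false,true,true,true], ![0,3,1,2,4,5]), (![true,false,false,true,false,true], ![2,0,1,4,3,5]), (![true,false,false,true,false,true], ![0,1,3,2,4,5]), (![true,false,true,false,true,false], ![0,1,3,2,4,5]), (![false,false,true,true,true,true], ![2,0,3,5,1,4])],
    ![(![true,false,true,true,false,true], ![2,0,4,1,5,3]), (![false,false,true,true,true,false], ![0,2,3,4,5,1]), (![true,true,true,false,true,true], ![4,3,0,1,2,5]), (![true,true,true,true,true,true], ![0,1,2,4,5,3]), (![false,true,true,false,true,true], ![0,3,1,2,4,5])],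
    ![(![false,true,true,false,false,true], ![1,3,2,0,4,5]), (![true,true,false,false,false,true], ![1,4,2,0,3,5]), (![true,true,true,false,true,true], ![0,1,2,5,3,4]), (![true,true,false,true,false,true], ![0,1,3,2,4,5]), (![true,false,true,false,true,true], ![0,4,1,2,3,5])]],
  ![![(![false,true,false,true,true,true], ![0,4,3,1,5,2]), (![false,true,true,false,false,true], ![0,1,3,2,4,5]), (![true,true,true,true,true,true], ![1,0,2,3,5,4]), (![true,true,false,false,false,true], ![0,1,2,4,3,5]), (![false,false,true,false,true,true], ![0,3,1,2,5,4])],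
    ![(![true,true,false,true,false,true], ![1,0,3,2,4,5]), (![true,false,true,false,true,true], ![0,4,1,2,3,5]), (![true,true,false,true,false,true], ![0,1,3,2,4,5]), (![true,true,true,false,true,true], ![0,1,2,5,3,4]), (![false,false,false,true,false,true], ![1,2,3,5,0,4])],
    ![(![true,false,true,false,false,true], ![0,1,2,4,5,3]), (![true,true,true,true,false,true], ![0,1,4,5,2,3]), (![true,true,false,true,true,false], ![0,1,2,4,3,5]), (![true,true,false,true,false,true], ![0,4,1,3,2,5]), (![true,true,true,true,true,false], ![0,2,5,3,4,1])],
    ![(![false,false,true,true,false,true], ![0,3,2,1,4,5]), (![false,true,false,true,true,false], ![2,5,0,1,4,3]), (![true,false,true,false,true,false], ![0,1,3,2,4,5]), (![true,false,false,true,false,true], ![0,1,3,2,4,5]), (![true,false,true,true,true,false], ![2,0,3,4,1,5])],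
    ![(![true,true,true,true,false,false], ![0,2,1,4,5,3]), (![true,false,false,true,true,false], ![0,3,4,1,2,5]), (![true,false,true,true,true,true], ![0,1,2,3,4,5]), (![true,true,true,true,true,true], ![0,2,1,4,3,5]), (![true,false,true,true,true,false], ![1,0,4,5,3,2])]],
  ![![(![false,true,true,true,true,true], ![4,1,0,3,5,2]), (![true,true,true,true,true,true], ![1,0,2,3,5,4]), (![false,true,false,false,true,true], ![2,1,0,3,5,4]), (![true,false,true,true,false,true], ![2,0,1,5,3,4]), (![false,true,false,true,false,true], ![4,0,5,1,2,3])],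
    ![(![true,false,false,true,true,true], ![0,4,1,2,5,3]), (![true,true,false,true,true,false], ![0,1,2,4,3,5]), (![true,true,true,true,true,false], ![0,2,5,3,4,1]), (![true,false,true,false,true,false], ![0,1,4,2,3,5]), (![true,false,true,true,true,true], ![0,1,3,4,2,5])],
    ![(![true,true,false,true,false,true], ![0,1,4,2,3,5]), (![true,false,true,true,true,true], ![0,1,2,3,4,5]), (![true,false,true,true,true,true], ![0,1,2,3,4,5]), (![true,true,true,false,true,true], ![0,3,1,4,2,5]), (![true,false,true,true,true,true], ![0,1,2,3,4,5])],
    ![(![true,true,true,false,true,true], ![0,2,1,3,4,5]), (![true,true,true,true,false,true], ![0,2,1,4,5,3]), (![true,false,true,true,true,true], ![1,2,3,0,4,5]), (![true,false,true,false,true,true], ![0,4,1,2,3,5]), (![true,true,false,true,false,true], ![0,2,1,3,5,4])],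
    ![(![true,true,true,false,true,false], ![0,3,2,1,4,5]), (![true,true,true,false,true,false], ![0,3,5,1,2,4]), (![false,true,true,true,true,false], ![2,0,1,4,3,5]), (![true,true,false,true,true,true], ![0,5,1,2,4,3]), (![true,true,true,false,false,false], ![0,1,2,3,4,5])]]]

def tA21 : Fin 5 → Fin 5 → Fin 5 → SPerm :=
![
  ![![(![true,true,true,true,true,true], ![0,1,2,3,4,5]), (![true,true,true,true,true,true], ![0,1,2,3,4,5]), (![true,true,true,true,true,true], ![0,1,2,3,4,5]), (![true,true,true,true,true,true], ![0,1,2,3,4,5]), (![true,true,true,true,true,true], ![0,1,2,3,4,5])],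
    ![(![true,true,true,true,true,true], ![1,0,2,3,5,4]), (![true,true,true,true,false,false], ![0,1,4,2,5,3]), (![true,false,false,false,true,false], ![0,1,2,3,4,5]), (![true,true,true,true,true,true], ![1,0,2,3,5,4]), (![true,true,true,true,true,true], ![1,0,2,3,5,4])],
    ![(![false,true,true,false,true,true], ![5,1,0,3,4,2]), (![true,true,true,true,false,false], ![1,0,5,3,2,4]), (![true,true,true,true,false,false], ![0,1,4,2,5,3]), (![true,true,true,true,true,true], ![1,0,2,3,5,4]), (![true,false,false,false,true,false], ![0,1,2,3,4,5])],
    ![(![false,true,true,false,true,true], ![1,0,5,3,2,4]), (![true,false,true,false,false,false], ![2,4,0,1,3,5]), (![true,true,true,true,true,true], ![1,0,2,3,5,4]), (![true,true,true,true,false,false], ![4,1,0,5,2,3]), (![false,true,true,true,true,false], ![1,3,0,5,2,4])],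
    ![(![false,true,true,true,false,true], ![1,3,0,2,5,4]), (![true,true,true,true,true,true], ![1,0,2,3,5,4]), (![false,true,true,true,false,true], ![1,3,4,0,2,5]), (![false,true,false,true,true,true], ![1,0,3,5,2,4]), (![false,true,false,false,true,false], ![1,0,4,2,3,5])]],
  ![![(![true,true,true,false,true,false], ![1,3,2,5,4,0]), (![true,true,true,true,false,false], ![1,0,2,4,5,3]), (![true,false,true,true,true,true], ![2,3,4,1,0,5]), (![false,true,true,false,true,false], ![2,1,3,4,0,5]), (![true,false,true,true,true,true], ![0,2,3,5,4,1])],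
    ![(![false,false,true,true,false,true], ![3,0,2,1,4,5]), (![true,true,true,false,false,false], ![0,1,2,3,4,5]), (![true,true,false,true,false,true], ![0,2,3,4,1,5]), (![true,false,true,true,true,false], ![0,2,1,3,5,4]), (![true,false,false,true,true,false], ![4,0,1,2,5,3])],
    ![(![true,true,false,true,false,false], ![1,2,0,4,5,3]), (![true,false,true,true,true,true], ![0,1,2,3,4,5]), (![true,false,true,true,false,true], ![0,3,4,1,5,2]), (![true,true,false,false,true,true], ![4,0,1,3,2,5]), (![true,false,true,true,true,true], ![0,1,2,3,4,5])],
    ![(![true,false,true,false,false,true], ![2,1,0,4,5,3]), (![true,true,true,false,false,true], ![1,0,3,2,4,5]), (![true,true,false,false,false,true], ![3,1,0,2,5,4]), (![false,false,true,false,true,true], ![1,2,0,4,3,5]), (![false,true,false,true,true,true], ![1,4,0,2,5,3])],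
    ![(![true,true,true,true,true,true], ![2,0,1,3,4,5]), (![true,true,true,true,false,true], ![0,1,5,4,2,3]), (![true,true,true,true,true,false], ![0,2,1,5,3,4]), (![true,true,true,true,false,true], ![0,2,4,1,3,5]), (![true,true,true,true,true,true], ![0,1,2,5,3,4])]],
  ![![(![true,false,true,true,true,true], ![1,3,2,5,4,0]), (![true,false,false,true,true,true], ![2,3,0,5,1,4]), (![true,true,true,true,false,false], ![1,0,2,4,5,3]), (![false,true,false,true,false,true], ![0,1,3,2,4,5]), (![true,true,true,true,false,true], ![2,1,5,3,0,4])],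
    ![(![true,false,true,false,false,true], ![2,1,0,4,5,3]), (![true,true,true,false,false,true], ![0,1,3,4,2,5]), (![false,true,true,false,true,true], ![0,3,5,2,1,4]), (![true,false,true,false,true,true], ![0,2,3,1,4,5]), (![true,false,false,true,true,true], ![1,0,5,2,3,4])],
    ![(![false,true,false,false,true,true], ![0,2,3,1,5,4]), (![true,true,true,true,true,true], ![0,2,1,4,3,5]), (![true,true,true,false,false,false], ![0,3,4,1,2,5]), (![true,false,false,true,true,false], ![4,0,1,2,5,3]), (![true,true,false,true,false,true], ![0,2,3,4,1,5])],
    ![(![true,true,true,true,true,true], ![2,0,1,3,4,5]), (![true,false,true,false,false,true], ![0,1,3,2,4,5]), (![false,true,true,false,true,false], ![5,0,1,2,4,3]), (![true,true,true,true,true,true], ![0,1,2,5,3,4]), (![true,false,false,true,true,false], ![0,1,3,2,4,5])],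
    ![(![false,true,true,false,false,true], ![0,3,2,1,4,5]), (![false,false,false,true,true,false], ![1,2,0,4,5,3]), (![true,true,true,true,true,false], ![0,1,2,4,5,3]), (![true,false,true,true,true,true], ![0,1,2,3,4,5]), (![true,true,true,false,false,true], ![0,1,3,2,4,5])]],
  ![![(![true,false,true,true,true,true], ![1,3,2,5,4,0]), (![false,true,false,false,true,true], ![2,1,0,3,5,4]), (![true,true,false,false,false,true], ![0,1,2,4,3,5]), (![false,true,false,true,true,true], ![0,2,3,1,4,5]), (![true,true,true,false,true,false], ![0,2,1,5,3,4])],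
    ![(![false,true,true,false,true,true], ![1,2,0,4,5,3]), (![true,true,true,false,false,true], ![0,1,3,2,4,5]), (![true,false,true,true,true,true], ![0,1,2,3,4,5]), (![true,true,true,true,true,false], ![0,1,2,4,5,3]), (![false,true,false,false,true,true], ![0,1,2,3,4,5])],
    ![(![true,true,true,true,true,true], ![2,0,1,3,4,5]), (![true,false,false,true,true,false], ![0,1,3,2,4,5]), (![true,true,false,true,true,true], ![0,1,4,5,2,3]), (![true,true,false,true,true,false], ![0,1,2,4,3,5]), (![true,false,true,false,false,true], ![0,1,3,2,4,5])],
    ![(![true,false,true,true,false,false], ![0,1,2,5,3,4]), (![true,true,false,true,false,true], ![0,2,3,4,1,5]), (![true,true,false,true,true,true], ![3,0,1,2,4,5]), (![true,true,true,false,false,false], ![0,3,4,1,2,5]), (![true,true,true,true,true,true], ![0,2,1,4,3,5])],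
    ![(![false,false,false,true,true,true], ![0,5,1,2,3,4]), (![true,false,true,true,true,true], ![0,5,1,3,4,2]), (![true,true,false,true,false,false], ![1,3,4,5,0,2]), (![true,false,false,true,true,true], ![0,2,4,3,1,5]), (![true,true,false,true,true,false], ![1,2,0,4,3,5])]],
  ![![(![true,true,true,false,true,false], ![1,3,2,5,4,0]), (![true,false,true,true,true,true], ![0,2,3,5,4,1]), (![false,true,false,false,true,true], ![2,3,0,5,4,1]), (![true,true,true,false,true,true], ![0,2,1,3,4,5]), (![false,true,false,false,true,true], ![3,0,2,4,1,5])],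
    ![(![true,true,true,true,true,true], ![2,0,1,3,4,5]), (![false,false,false,false,true,true], ![4,0,1,2,5,3]), (![true,true,true,true,false,true], ![0,2,4,1,3,5]), (![true,true,true,true,true,false], ![0,2,1,5,3,4]), (![true,true,false,true,true,false], ![0,1,2,4,3,5])],
    ![(![false,true,false,true,true,true], ![1,0,5,4,2,3]), (![false,true,true,true,true,false], ![1,4,0,2,3,5]), (![true,true,true,false,false,true], ![0,1,3,4,2,5]), (![true,false,true,true,true,true], ![0,5,1,3,4,2]), (![true,false,true,true,false,true], ![0,2,3,5,1,4])],
    ![(![true,false,true,true,true,false], ![0,3,2,1,4,5]), (![true,false,true,true,true,true], ![0,1,2,3,4,5]), (![true,false,true,true,true,true], ![0,1,2,3,4,5]), (![true,false,true,true,false,true], ![0,3,4,1,5,2]), (![true,false,true,true,true,true], ![0,1,2,3,4,5])],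
    ![(![true,false,true,true,true,true], ![0,1,4,2,3,5]), (![true,false,false,true,true,false], ![0,1,3,4,2,5]), (![true,false,true,true,true,false], ![0,2,1,3,5,4]), (![true,true,false,true,false,true], ![0,2,3,4,1,5]), (![true,true,true,false,false,false], ![0,1,2,3,4,5])]]]

def tA13 : Fin 5 → Fin 5 → Fin 5 → SPerm :=
![
  ![![(![true,true,true,true,true,true], ![0,1,2,3,4,5]), (![true,true,true,true,true,true], ![0,1,2,3,4,5]), (![true,true,true,true,true,true], ![0,1,2,3,4,5]), (![true,true,true,true,true,true], ![0,1,2,3,4,5]), (![true,true,true,true,true,true], ![0,1,2,3,4,5])],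
    ![(![true,true,true,false,true,false], ![5,0,2,1,4,3]), (![true,true,true,true,false,false], ![0,1,2,3,5,4]), (![true,true,true,true,false,false], ![1,0,3,2,5,4]), (![true,true,false,true,true,true], ![0,1,2,3,4,5]), (![true,true,true,true,true,false], ![1,2,0,3,4,5])],
    ![(![false,true,true,true,true,true], ![5,0,2,1,4,3]), (![true,true,false,true,true,true], ![0,1,2,3,4,5]), (![true,true,true,true,false,true], ![0,1,5,2,3,4]), (![true,true,true,true,true,false], ![1,2,0,3,4,5]), (![false,true,true,true,false,true], ![2,0,1,3,5,4])],
    ![(![false,true,true,true,true,true], ![5,0,2,1,4,3]), (![true,false,true,false,false,false], ![2,1,0,4,3,5]), (![true,true,true,true,true,false], ![1,2,0,3,4,5]), (![true,false,false,false,true,true], ![0,1,2,3,5,4]), (![true,true,false,true,true,true], ![0,1,2,3,4,5])],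
    ![(![true,true,true,false,true,false], ![5,0,2,1,4,3]), (![true,true,true,true,true,false], ![1,2,0,3,4,5]), (![true,true,false,true,true,true], ![0,1,2,3,4,5]), (![false,false,false,true,false,true], ![1,2,4,3,5,0]), (![true,false,false,false,true,false], ![0,1,5,2,3,4])]],
  ![![(![true,true,true,true,true,false], ![1,0,2,3,5,4]), (![true,false,false,false,true,true], ![0,4,5,2,1,3]), (![true,false,true,true,true,false], ![0,2,3,1,4,5]), (![true,true,false,false,true,false], ![1,0,3,5,4,2]), (![true,true,true,true,true,true], ![0,2,3,4,1,5])],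
    ![(![true,true,true,false,false,true], ![3,2,4,0,5,1]), (![true,true,true,false,false,false], ![0,1,2,3,4,5]), (![true,false,false,true,true,true], ![0,2,3,5,1,4]), (![false,true,false,false,false,false], ![2,4,0,1,5,3]), (![true,true,true,true,false,false], ![0,3,1,2,5,4])],
    ![(![true,true,true,false,true,true], ![2,1,5,3,4,0]), (![true,true,false,true,false,true], ![0,2,1,3,5,4]), (![true,false,true,false,true,true], ![0,4,1,2,3,5]), (![true,false,true,true,true,false], ![4,1,2,3,0,5]), (![true,true,true,false,false,false], ![0,1,2,4,5,3])],
    ![(![false,true,false,true,true,false], ![1,0,3,2,4,5]), (![true,false,true,false,false,false], ![0,2,1,3,4,5]), (![true,true,true,false,true,false], ![0,3,4,5,1,2]), (![true,true,true,true,true,false], ![0,1,4,5,2,3]), (![true,true,false,false,true,true], ![0,2,1,3,4,5])],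
    ![(![true,false,true,true,true,true], ![2,0,3,1,5,4]), (![true,false,false,false,true,true], ![3,0,1,2,5,4]), (![true,false,true,true,false,false], ![3,0,2,1,4,5]), (![true,true,true,true,true,true], ![0,2,1,3,5,4]), (![true,false,true,true,true,true], ![3,0,1,2,5,4])]],
  ![![(![true,true,false,true,true,true], ![1,0,3,5,2,4]), (![true,false,true,false,true,false], ![1,0,4,3,5,2]), (![true,true,true,true,false,true], ![0,4,2,1,3,5]), (![true,true,true,true,true,true], ![0,2,3,4,1,5]), (![true,true,true,false,true,false], ![0,2,5,3,1,4])],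
    ![(![true,false,true,true,true,false], ![0,1,2,3,4,5]), (![true,true,true,true,true,false], ![0,1,4,5,2,3]), (![true,true,true,true,true,true], ![0,2,1,4,3,5]), (![true,true,false,false,true,true], ![0,2,1,3,4,5]), (![true,false,false,true,true,false], ![0,3,4,1,2,5])],
    ![(![false,true,false,false,true,true], ![0,2,3,4,5,1]), (![true,false,true,false,false,true], ![0,2,3,1,5,4]), (![true,false,false,false,false,true], ![0,1,2,5,3,4]), (![true,true,true,true,false,false], ![0,3,1,2,5,4]), (![false,true,false,false,true,true], ![0,5,1,2,4,3])],
    ![(![true,false,false,true,true,false], ![2,0,1,5,3,4]), (![true,true,true,true,true,true], ![0,2,1,3,5,4]), (![true,true,false,false,false,true], ![4,3,0,1,2,5]), (![true,false,false,true,false,false], ![3,0,5,1,2,4]), (![true,true,true,true,true,true], ![0,3,1,2,4,5])],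
    ![(![false,true,true,false,false,true], ![1,3,2,0,4,5]), (![false,true,false,true,false,true], ![1,4,2,0,3,5]), (![true,false,false,true,false,false], ![0,2,1,5,3,4]), (![true,true,true,false,false,false], ![0,1,2,4,5,3]), (![true,false,true,false,true,true], ![0,4,1,2,3,5])]],
  ![![(![true,true,false,true,true,true], ![4,0,3,1,2,5]), (![true,true,false,false,true,true], ![0,2,5,3,4,1]), (![true,true,true,true,true,true], ![0,2,3,4,1,5]), (![true,false,false,false,true,true], ![0,4,5,2,1,3]), (![false,false,true,false,true,true], ![0,3,1,2,5,4])],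
    ![(![false,true,true,true,true,true], ![0,2,1,3,4,5]), (![true,false,true,false,true,true], ![0,4,1,2,3,5]), (![true,true,true,false,false,false], ![0,1,2,4,5,3]), (![true,false,false,true,false,false], ![0,2,1,5,3,4]), (![true,false,true,true,true,true], ![1,2,3,0,4,5])],
    ![(![true,false,true,false,false,true], ![0,1,2,4,5,3]), (![false,true,false,true,true,true], ![0,1,4,2,3,5]), (![true,true,true,false,true,true], ![0,3,1,5,2,4]), (![true,true,false,false,false,true], ![4,3,0,1,2,5]), (![true,true,true,true,false,false], ![0,2,3,4,5,1])],
    ![(![true,true,true,false,true,true], ![0,3,2,1,4,5]), (![true,false,true,true,true,true], ![0,2,1,5,4,3]), (![true,true,true,true,false,false], ![0,3,1,2,5,4]), (![true,false,false,false,false,true], ![0,1,2,5,3,4]), (![true,true,false,true,true,false], ![0,2,3,4,1,5])],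
    ![(![true,true,false,true,false,true], ![1,2,4,0,5,3]), (![true,false,false,true,true,false], ![0,3,4,1,2,5]), (![true,true,false,false,true,true], ![0,2,1,3,4,5]), (![true,true,true,true,true,true], ![0,2,1,4,3,5]), (![true,true,true,true,false,true], ![0,1,3,4,2,5])]],
  ![![(![false,false,true,true,true,false], ![4,0,3,1,2,5]), (![true,true,true,true,true,true], ![0,2,3,4,1,5]), (![false,true,true,false,false,true], ![2,1,0,3,5,4]), (![true,false,true,true,true,true], ![0,2,5,1,3,4]), (![true,true,true,true,false,true], ![0,4,2,1,3,5])],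
    ![(![true,true,true,true,true,false], ![4,0,1,2,3,5]), (![true,true,true,false,true,true], ![0,3,1,5,2,4]), (![true,true,true,true,false,false], ![0,2,3,4,5,1]), (![true,false,true,false,true,false], ![0,1,4,2,3,5]), (![true,false,true,true,true,true], ![0,1,3,4,2,5])],
    ![(![true,true,false,true,true,true], ![0,2,1,4,5,3]), (![true,true,false,false,true,true], ![0,2,1,3,4,5]), (![true,true,true,true,false,true], ![0,1,3,4,2,5]), (![true,true,true,false,true,false], ![0,3,4,5,1,2]), (![true,false,true,false,false,false], ![0,2,1,3,4,5])],
    ![(![true,false,false,true,true,false], ![0,1,3,2,5,4]), (![true,true,true,false,false,false], ![0,1,2,4,5,3]), (![true,false,true,true,true,true], ![1,2,3,0,4,5]), (![true,false,true,false,true,true], ![0,4,1,2,3,5]), (![true,true,false,true,false,true], ![0,2,1,3,5,4])],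
    ![(![true,true,true,false,true,true], ![0,3,2,1,4,5]), (![true,true,true,true,false,false], ![0,3,1,2,5,4]), (![true,false,false,false,true,true], ![0,2,3,1,4,5]), (![true,true,true,false,true,true], ![0,2,3,1,4,5]), (![true,true,true,false,false,false], ![0,1,2,3,4,5])]]]

def tA31 : Fin 5 → Fin 5 → Fin 5 → SPerm :=
![
  ![![(![true,true,true,true,true,true], ![0,1,2,3,4,5]), (![true,true,true,true,true,true], ![0,1,2,3,4,5]), (![true,true,true,true,true,true], ![0,1,2,3,4,5]), (![true,true,true,true,true,true], ![0,1,2,3,4,5]), (![true,true,true,true,true,true], ![0,1,2,3,4,5])],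
    ![(![true,true,true,true,false,true], ![1,0,2,3,5,4]), (![true,true,true,true,false,false], ![0,1,2,3,5,4]), (![true,true,false,true,true,true], ![0,1,2,3,4,5]), (![true,false,false,true,false,false], ![0,1,3,4,5,2]), (![true,true,false,false,true,false], ![1,0,5,2,4,3])],
    ![(![true,true,true,false,true,true], ![5,1,0,3,4,2]), (![true,true,true,false,true,true], ![0,1,3,4,5,2]), (![true,false,false,false,true,true], ![0,1,2,3,5,4]), (![true,true,true,false,true,true], ![1,0,4,2,5,3]), (![true,true,false,true,true,true], ![0,1,2,3,4,5])],
    ![(![false,true,false,false,true,true], ![1,0,5,3,2,4]), (![true,true,false,true,true,true], ![0,1,2,3,4,5]), (![false,false,true,true,false,true], ![1,2,0,4,5,3]), (![true,false,true,true,true,false], ![4,1,2,3,0,5]), (![false,true,false,true,false,false], ![1,3,4,0,5,2])],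
    ![(![false,true,true,true,true,true], ![1,3,0,2,5,4]), (![false,false,false,true,true,true], ![1,2,3,0,5,4]), (![false,true,true,true,false,false], ![1,3,2,0,4,5]), (![true,true,false,true,true,true], ![0,1,2,3,4,5]), (![false,true,true,true,true,true], ![1,2,3,0,5,4])]],
  ![![(![true,true,true,true,true,false], ![1,3,2,5,4,0]), (![true,true,true,true,false,false], ![1,0,3,2,5,4]), (![true,true,false,true,true,false], ![1,2,0,3,5,4]), (![false,false,false,true,true,true], ![2,3,4,1,0,5]), (![true,false,false,false,true,true], ![3,0,2,4,1,5])],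
    ![(![false,false,true,true,false,true], ![3,0,2,1,4,5]), (![true,true,true,false,false,false], ![0,1,2,3,4,5]), (![true,true,false,true,false,true], ![0,2,3,4,1,5]), (![true,false,true,true,true,false], ![0,2,1,3,5,4]), (![true,true,false,true,true,true], ![3,0,1,2,4,5])],
    ![(![true,false,true,false,false,false], ![2,1,0,4,3,5]), (![true,true,true,true,false,false], ![0,2,3,1,5,4]), (![true,false,false,true,false,false], ![5,0,1,3,2,4]), (![true,true,false,true,false,false], ![0,4,3,5,1,2]), (![true,true,true,false,false,false], ![0,1,2,5,3,4])],
    ![(![true,true,true,false,true,true], ![0,1,4,5,2,3]), (![true,true,false,true,true,false], ![0,3,1,2,4,5]), (![true,true,true,false,true,true], ![1,3,4,2,0,5]), (![true,true,false,false,true,true], ![0,4,1,2,5,3]), (![true,true,true,true,true,true], ![0,2,1,3,5,4])],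
    ![(![true,true,true,true,true,false], ![2,0,1,3,4,5]), (![true,true,true,true,true,true], ![0,4,1,2,3,5]), (![true,false,true,false,true,true], ![0,2,1,3,4,5]), (![true,true,false,false,false,false], ![0,2,1,3,4,5]), (![true,true,false,true,true,false], ![0,4,5,1,2,3])]],
  ![![(![true,false,true,false,true,true], ![1,3,2,5,4,0]), (![false,true,true,true,true,true], ![0,2,1,3,4,5]), (![false,true,true,true,true,false], ![3,5,1,0,2,4]), (![true,true,true,true,true,true], ![0,2,3,1,4,5]), (![false,false,false,false,true,false], ![2,3,0,5,1,4])],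
    ![(![true,true,true,false,true,true], ![0,1,4,5,2,3]), (![true,false,true,false,true,false], ![1,0,3,2,4,5]), (![true,true,true,false,true,true], ![0,3,2,4,1,5]), (![true,true,true,true,true,true], ![0,2,1,3,5,4]), (![false,true,true,true,false,false], ![1,3,4,2,0,5])],
    ![(![false,true,false,false,true,true], ![0,2,3,1,5,4]), (![true,true,true,true,true,true], ![0,2,1,4,3,5]), (![true,true,true,false,false,false], ![0,3,4,1,2,5]), (![false,true,true,true,false,true], ![0,1,3,4,2,5]), (![true,true,false,true,false,true], ![0,2,3,4,1,5])],
    ![(![true,true,true,true,true,false], ![2,0,1,3,4,5]), (![true,false,false,false,false,true], ![0,2,1,4,5,3]), (![true,true,true,true,true,true], ![0,4,1,2,3,5]), (![true,false,false,false,true,false], ![0,1,2,4,5,3]), (![true,false,true,false,true,true], ![0,2,1,3,4,5])],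
    ![(![true,false,true,true,true,false], ![0,1,2,3,4,5]), (![true,true,true,false,false,true], ![0,4,1,3,5,2]), (![true,true,true,true,false,false], ![0,2,3,1,5,4]), (![true,true,true,false,false,false], ![0,1,2,5,3,4]), (![true,false,false,true,true,false], ![0,3,1,2,5,4])]],
  ![![(![true,false,true,false,true,true], ![1,3,2,5,4,0]), (![false,true,true,false,false,true], ![0,5,1,2,3,4]), (![true,true,true,true,true,false], ![0,2,4,1,5,3]), (![false,false,false,true,true,true], ![0,2,3,5,4,1]), (![true,true,false,false,true,false], ![2,1,0,3,5,4])],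
    ![(![true,false,true,true,true,true], ![0,3,2,1,4,5]), (![true,true,true,false,true,false], ![0,5,1,3,4,2]), (![true,true,true,false,false,false], ![0,1,2,5,3,4]), (![true,true,true,true,false,false], ![0,2,3,1,5,4]), (![true,true,false,true,false,false], ![0,4,3,5,1,2])],
    ![(![true,true,true,true,true,false], ![2,0,1,3,4,5]), (![true,false,true,false,true,true], ![0,2,1,3,4,5]), (![true,false,false,false,true,false], ![0,1,2,4,5,3]), (![true,true,true,true,true,true], ![0,4,1,2,3,5]), (![true,false,false,false,false,true], ![0,2,1,4,5,3])],
    ![(![true,false,true,true,false,false], ![0,1,2,5,3,4]), (![true,true,false,true,false,true], ![0,2,3,4,1,5]), (![true,true,false,true,true,true], ![3,0,1,2,4,5]), (![true,true,true,false,false,false], ![0,3,4,1,2,5]), (![true,true,true,true,true,true], ![0,2,1,4,3,5])],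
    ![(![true,false,true,true,true,false], ![0,5,1,2,3,4]), (![true,true,true,true,true,false], ![1,2,3,4,0,5]), (![true,true,false,true,true,true], ![0,1,4,2,3,5]), (![true,true,false,true,true,true], ![0,2,1,5,4,3]), (![true,true,true,false,true,false], ![0,4,1,2,3,5])]],
  ![![(![true,true,true,true,true,false], ![1,3,2,5,4,0]), (![true,true,true,true,true,false], ![0,2,4,1,5,3]), (![false,false,false,true,true,true], ![2,3,4,1,0,5]), (![true,false,true,true,true,true], ![0,2,1,5,3,4]), (![true,true,true,true,false,false], ![3,0,1,5,2,4])],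
    ![(![true,true,true,true,true,false], ![2,0,1,3,4,5]), (![true,true,false,true,true,false], ![0,4,5,1,2,3]), (![true,true,false,false,false,false], ![0,2,1,3,4,5]), (![true,false,true,false,true,true], ![0,2,1,3,4,5]), (![true,true,true,true,true,true], ![0,4,1,2,3,5])],
    ![(![true,false,true,true,true,false], ![0,5,1,2,3,4]), (![true,true,false,true,true,true], ![0,1,4,2,3,5]), (![true,true,false,true,true,true], ![0,3,1,4,5,2]), (![true,false,true,false,false,true], ![0,1,3,2,5,4]), (![true,true,true,false,true,true], ![0,3,2,4,1,5])],
    ![(![true,false,true,true,true,true], ![0,3,2,1,4,5]), (![true,true,true,false,false,false], ![0,1,2,5,3,4]), (![true,false,false,false,true,true], ![0,3,1,2,4,5]), (![true,false,true,true,true,true], ![0,3,1,2,4,5]), (![true,true,true,true,false,false], ![0,2,3,1,5,4])],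
    ![(![true,false,true,true,true,true], ![0,1,4,2,3,5]), (![true,false,false,true,true,false], ![0,1,3,4,2,5]), (![true,false,true,true,true,false], ![0,2,1,3,5,4]), (![true,true,false,true,false,true], ![0,2,3,4,1,5]), (![true,true,true,false,false,false], ![0,1,2,3,4,5])]]]


def zsign (b : Bool) : ℤ := if b then 1 else -1
def msign (b : Bool) : ZMod 5 := if b then 1 else -1

def spZ (e : SPerm) (v : Fin 6 → ℤ) : Fin 6 → ℤ := fun k => zsign (e.1 k) * v (e.2 k)
def spM (e : SPerm) (v : Fin 6 → ZMod 5) : Fin 6 → ZMod 5 := fun k => msign (e.1 k) * v (e.2 k)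

def IsInv (e e' : SPerm) : Prop :=
  (∀ k, e.2 (e'.2 k) = k) ∧ (∀ k, e'.2 (e.2 k) = k) ∧ (∀ k, e'.1 k = e.1 (e'.2 k))

instance (e e' : SPerm) : Decidable (IsInv e e') := by unfold IsInv; infer_instance

lemma cast_spZ (e : SPerm) (v : Fin 6 → ℤ) (k : Fin 6) :
    ((spZ e v k : ℤ) : ZMod 5) = spM e (fun l => ((v l : ℤ) : ZMod 5)) k := by
  unfold spZ spM zsign msign
  cases e.1 k <;> push_cast <;> ring

lemma spZ_inv {e e' : SPerm} (h : IsInv e e') (v : Fin 6 → ℤ) : spZ e' (spZ e v) = v := by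
  funext k
  unfold spZ
  rw [h.2.2 k, h.1 k]
  cases e.1 (e'.2 k) <;> simp [zsign]

lemma spZ_inv' {e e' : SPerm} (h : IsInv e e') (v : Fin 6 → ℤ) : spZ e (spZ e' v) = v := by
  funext k
  unfold spZ
  have hb : e'.1 (e.2 k) = e.1 k := by rw [h.2.2 (e.2 k), h.2.1 k]
  rw [h.2.1 k, hb]
  cases e.1 k <;> simp [zsign]

lemma spZ_norm {e e' : SPerm} (h : IsInv e e') (v : Fin 6 → ℤ) :
    spZ e v ⬝ᵥ spZ e v = v ⬝ᵥ v := by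
  have hbij : Function.Bijective e.2 :=
    Function.bijective_iff_has_inverse.mpr ⟨e'.2, fun k => h.2.1 k, fun k => h.1 k⟩
  unfold dotProduct spZ
  calc ∑ k, (zsign (e.1 k) * v (e.2 k)) * (zsign (e.1 k) * v (e.2 k))
      = ∑ k, v (e.2 k) * v (e.2 k) := by
        apply Finset.sum_congr rfl
        intro k _
        cases e.1 k <;> simp [zsign] <;> ring
    _ = ∑ k, v k * v k :=
        Fintype.sum_bijective e.2 hbij _ _ (fun k => rfl)

def fin5 (a : ZMod 5) : Fin 5 := ⟨a.val, a.val_lt⟩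

def T12 (a b d : ZMod 5) : SPerm := tA12 (fin5 a) (fin5 b) (fin5 d)
def T21 (a b d : ZMod 5) : SPerm := tA21 (fin5 a) (fin5 b) (fin5 d)
def T13 (a b d : ZMod 5) : SPerm := tA13 (fin5 a) (fin5 b) (fin5 d)
def T31 (a b d : ZMod 5) : SPerm := tA31 (fin5 a) (fin5 b) (fin5 d)

/- the three codes mod 5, as parameterized vectors -/
def zc1 (a b d : ZMod 5) : Fin 6 → ZMod 5 := ![a, b, d, a+b, 2*a+d, a+2*b+d]
def zc2 (a b d : ZMod 5) : Fin 6 → ZMod 5 := ![a, b, d, 2*a+b, b+d, 3*a+2*b+d]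
def zc3 (a b d : ZMod 5) : Fin 6 → ZMod 5 := ![a, b, d, 2*a+b, b+d, 2*a+3*b+d]

/- the lattice basis matrices -/
def stA1 : Matrix (Fin 6) (Fin 6) ℤ :=
  !![1,0,0,0,0,0; 0,1,0,0,0,0; 0,0,1,0,0,0; 1,1,0,5,0,0; 2,0,1,0,5,0; 1,2,1,0,0,5]
def stA2 : Matrix (Fin 6) (Fin 6) ℤ :=
  !![1,0,0,0,0,0; 0,1,0,0,0,0; 0,0,1,0,0,0; 2,1,0,5,0,0; 0,1,1,0,5,0; 3,2,1,0,0,5]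
def stA3 : Matrix (Fin 6) (Fin 6) ℤ :=
  !![1,0,0,0,0,0; 0,1,0,0,0,0; 0,0,1,0,0,0; 2,1,0,5,0,0; 0,1,1,0,5,0; 2,3,1,0,0,5]

lemma paperA_0 : paperA 0 = stA1 := rfl
lemma paperA_1 : paperA 1 = stA2 := rfl
lemma paperA_2 : paperA 2 = stA3 := rfl

lemma mv1 (x : Fin 6 → ℤ) : stA1.mulVec x =
    ![x 0, x 1, x 2, x 0 + x 1 + 5*x 3, 2*x 0 + x 2 + 5*x 4, x 0 + 2*x 1 + x 2 + 5*x 5] := by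
  funext k
  fin_cases k
  · show ![(1:ℤ),0,0,0,0,0] ⬝ᵥ x = _ ; rw [stdp6] ; simp only [stcm0, stcm1, stcm2, stcm3, stcm4, stcm5] ; ring
  · show ![(0:ℤ),1,0,0,0,0] ⬝ᵥ x = _ ; rw [stdp6] ; simp only [stcm0, stcm1, stcm2, stcm3, stcm4, stcm5] ; ring
  · show ![(0:ℤ),0,1,0,0,0] ⬝ᵥ x = _ ; rw [stdp6] ; simp only [stcm0, stcm1, stcm2, stcm3, stcm4, stcm5] ; ring
  · show ![(1:ℤ),1,0,5,0,0] ⬝ᵥ x = _ ; rw [stdp6] ; simp only [stcm0, stcm1, stcm2, stcm3, stcm4, stcm5] ; ring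
  · show ![(2:ℤ),0,1,0,5,0] ⬝ᵥ x = _ ; rw [stdp6] ; simp only [stcm0, stcm1, stcm2, stcm3, stcm4, stcm5] ; ring
  · show ![(1:ℤ),2,1,0,0,5] ⬝ᵥ x = _ ; rw [stdp6] ; simp only [stcm0, stcm1, stcm2, stcm3, stcm4, stcm5] ; ring

lemma mv2 (x : Fin 6 → ℤ) : stA2.mulVec x =
    ![x 0, x 1, x 2, 2*x 0 + x 1 + 5*x 3, x 1 + x 2 + 5*x 4, 3*x 0 + 2*x 1 + x 2 + 5*x 5] := by
  funext k
  fin_cases k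
  · show ![(1:ℤ),0,0,0,0,0] ⬝ᵥ x = _ ; rw [stdp6] ; simp only [stcm0, stcm1, stcm2, stcm3, stcm4, stcm5] ; ring
  · show ![(0:ℤ),1,0,0,0,0] ⬝ᵥ x = _ ; rw [stdp6] ; simp only [stcm0, stcm1, stcm2, stcm3, stcm4, stcm5] ; ring
  · show ![(0:ℤ),0,1,0,0,0] ⬝ᵥ x = _ ; rw [stdp6] ; simp only [stcm0, stcm1, stcm2, stcm3, stcm4, stcm5] ; ring
  · show ![(2:ℤ),1,0,5,0,0] ⬝ᵥ x = _ ; rw [stdp6] ; simp only [stcm0, stcm1, stcm2, stcm3, stcm4, stcm5] ; ring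
  · show ![(0:ℤ),1,1,0,5,0] ⬝ᵥ x = _ ; rw [stdp6] ; simp only [stcm0, stcm1, stcm2, stcm3, stcm4, stcm5] ; ring
  · show ![(3:ℤ),2,1,0,0,5] ⬝ᵥ x = _ ; rw [stdp6] ; simp only [stcm0, stcm1, stcm2, stcm3, stcm4, stcm5] ; ring

lemma mv3 (x : Fin 6 → ℤ) : stA3.mulVec x =
    ![x 0, x 1, x 2, 2*x 0 + x 1 + 5*x 3, x 1 + x 2 + 5*x 4, 2*x 0 + 3*x 1 + x 2 + 5*x 5] := by
  funext k
  fin_cases k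
  · show ![(1:ℤ),0,0,0,0,0] ⬝ᵥ x = _ ; rw [stdp6] ; simp only [stcm0, stcm1, stcm2, stcm3, stcm4, stcm5] ; ring
  · show ![(0:ℤ),1,0,0,0,0] ⬝ᵥ x = _ ; rw [stdp6] ; simp only [stcm0, stcm1, stcm2, stcm3, stcm4, stcm5] ; ring
  · show ![(0:ℤ),0,1,0,0,0] ⬝ᵥ x = _ ; rw [stdp6] ; simp only [stcm0, stcm1, stcm2, stcm3, stcm4, stcm5] ; ring
  · show ![(2:ℤ),1,0,5,0,0] ⬝ᵥ x = _ ; rw [stdp6] ; simp only [stcm0, stcm1, stcm2, stcm3, stcm4, stcm5] ; ring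
  · show ![(0:ℤ),1,1,0,5,0] ⬝ᵥ x = _ ; rw [stdp6] ; simp only [stcm0, stcm1, stcm2, stcm3, stcm4, stcm5] ; ring
  · show ![(2:ℤ),3,1,0,0,5] ⬝ᵥ x = _ ; rw [stdp6] ; simp only [stcm0, stcm1, stcm2, stcm3, stcm4, stcm5] ; ring

lemma zmod5_five : (5 : ZMod 5) = 0 := by decide

/- reduction of lattice vectors mod 5 -/
lemma castMv1 (x : Fin 6 → ℤ) :
    (fun k => ((stA1.mulVec x k : ℤ) : ZMod 5)) = zc1 (x 0 : ℤ) (x 1 : ℤ) (x 2 : ℤ) := by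
  rw [mv1]
  funext k
  fin_cases k <;>
    simp only [stcm0, stcm1, stcm2, stcm3, stcm4, stcm5, zc1] <;>
    push_cast [zmod5_five] <;> ring

lemma castMv2 (x : Fin 6 → ℤ) :
    (fun k => ((stA2.mulVec x k : ℤ) : ZMod 5)) = zc2 (x 0 : ℤ) (x 1 : ℤ) (x 2 : ℤ) := by
  rw [mv2]
  funext k
  fin_cases k <;>
    simp only [stcm0, stcm1, stcm2, stcm3, stcm4, stcm5, zc2] <;>
    push_cast [zmod5_five] <;> ring

lemma castMv3 (x : Fin 6 → ℤ) :
    (fun k => ((stA3.mulVec x k : ℤ) : ZMod 5)) = zc3 (x 0 : ℤ) (x 1 : ℤ) (x 2 : ℤ) := by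
  rw [mv3]
  funext k
  fin_cases k <;>
    simp only [stcm0, stcm1, stcm2, stcm3, stcm4, stcm5, zc3] <;>
    push_cast [zmod5_five] <;> ring

/- integral "inverse" maps of the basis matrices -/
def inv1 (w : Fin 6 → ℤ) : Fin 6 → ℤ :=
  ![w 0, w 1, w 2, (w 3 - (w 0 + w 1))/5, (w 4 - (2*w 0 + w 2))/5, (w 5 - (w 0 + 2*w 1 + w 2))/5]
def inv2 (w : Fin 6 → ℤ) : Fin 6 → ℤ :=
  ![w 0, w 1, w 2, (w 3 - (2*w 0 + w 1))/5, (w 4 - (w 1 + w 2))/5, (w 5 - (3*w 0 + 2*w 1 + w 2))/5]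
def inv3 (w : Fin 6 → ℤ) : Fin 6 → ℤ :=
  ![w 0, w 1, w 2, (w 3 - (2*w 0 + w 1))/5, (w 4 - (w 1 + w 2))/5, (w 5 - (2*w 0 + 3*w 1 + w 2))/5]

lemma dvd_of_cast_eq {u v : ℤ} (h : ((u : ℤ) : ZMod 5) = ((v : ℤ) : ZMod 5)) : (5:ℤ) ∣ u - v := by
  have : ((u - v : ℤ) : ZMod 5) = 0 := by push_cast; rw [h]; ring
  exact_mod_cast (ZMod.intCast_zmod_eq_zero_iff_dvd (u - v) 5).mp this

lemma invSpec1 (w : Fin 6 → ℤ)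
    (h : (fun k => ((w k : ℤ) : ZMod 5)) = zc1 (w 0 : ℤ) (w 1 : ℤ) (w 2 : ℤ)) :
    stA1.mulVec (inv1 w) = w := by
  have h3 : (5:ℤ) ∣ w 3 - (w 0 + w 1) := by
    refine dvd_of_cast_eq ?_
    have := congrFun h 3
    simp only [zc1, stcv3] at this
    push_cast
    rw [this]
    try ring
  have h4 : (5:ℤ) ∣ w 4 - (2*w 0 + w 2) := by
    refine dvd_of_cast_eq ?_
    have := congrFun h 4
    simp only [zc1, stcv4] at this
    push_cast
    rw [this]
    try ring
  have h5 : (5:ℤ) ∣ w 5 - (w 0 + 2*w 1 + w 2) := by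
    refine dvd_of_cast_eq ?_
    have := congrFun h 5
    simp only [zc1, stcv5] at this
    push_cast
    rw [this]
    try ring
  rw [mv1]
  funext k
  fin_cases k <;>
    simp only [inv1, stcm0, stcm1, stcm2, stcm3, stcm4, stcm5, stcv0, stcv1, stcv2, stcv3,
      stcv4, stcv5, stmk0, stmk1, stmk2, stmk3, stmk4, stmk5] <;>
    omega

lemma invSpec2 (w : Fin 6 → ℤ)
    (h : (fun k => ((w k : ℤ) : ZMod 5)) = zc2 (w 0 : ℤ) (w 1 : ℤ) (w 2 : ℤ)) :
    stA2.mulVec (inv2 w) = w := by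
  have h3 : (5:ℤ) ∣ w 3 - (2*w 0 + w 1) := by
    refine dvd_of_cast_eq ?_
    have := congrFun h 3
    simp only [zc2, stcv3] at this
    push_cast
    rw [this]
    try ring
  have h4 : (5:ℤ) ∣ w 4 - (w 1 + w 2) := by
    refine dvd_of_cast_eq ?_
    have := congrFun h 4
    simp only [zc2, stcv4] at this
    push_cast
    rw [this]
    try ring
  have h5 : (5:ℤ) ∣ w 5 - (3*w 0 + 2*w 1 + w 2) := by
    refine dvd_of_cast_eq ?_
    have := congrFun h 5
    simp only [zc2, stcv5] at this
    push_cast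
    rw [this]
    try ring
  rw [mv2]
  funext k
  fin_cases k <;>
    simp only [inv2, stcm0, stcm1, stcm2, stcm3, stcm4, stcm5, stcv0, stcv1, stcv2, stcv3,
      stcv4, stcv5, stmk0, stmk1, stmk2, stmk3, stmk4, stmk5] <;>
    omega

lemma invSpec3 (w : Fin 6 → ℤ)
    (h : (fun k => ((w k : ℤ) : ZMod 5)) = zc3 (w 0 : ℤ) (w 1 : ℤ) (w 2 : ℤ)) :
    stA3.mulVec (inv3 w) = w := by
  have h3 : (5:ℤ) ∣ w 3 - (2*w 0 + w 1) := by
    refine dvd_of_cast_eq ?_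
    have := congrFun h 3
    simp only [zc3, stcv3] at this
    push_cast
    rw [this]
    try ring
  have h4 : (5:ℤ) ∣ w 4 - (w 1 + w 2) := by
    refine dvd_of_cast_eq ?_
    have := congrFun h 4
    simp only [zc3, stcv4] at this
    push_cast
    rw [this]
    try ring
  have h5 : (5:ℤ) ∣ w 5 - (2*w 0 + 3*w 1 + w 2) := by
    refine dvd_of_cast_eq ?_
    have := congrFun h 5
    simp only [zc3, stcv5] at this
    push_cast
    rw [this]
    try ring
  rw [mv3]
  funext k
  fin_cases k <;>
    simp only [inv3, stcm0, stcm1, stcm2, stcm3, stcm4, stcm5, stcv0, stcv1, stcv2, stcv3,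
      stcv4, stcv5, stmk0, stmk1, stmk2, stmk3, stmk4, stmk5] <;>
    omega

lemma invId1 (x : Fin 6 → ℤ) : inv1 (stA1.mulVec x) = x := by
  rw [mv1]
  funext k
  fin_cases k <;>
    simp only [inv1, stcm0, stcm1, stcm2, stcm3, stcm4, stcm5, stcv0, stcv1, stcv2, stcv3,
      stcv4, stcv5, stmk0, stmk1, stmk2, stmk3, stmk4, stmk5] <;>
    omega

lemma invId2 (x : Fin 6 → ℤ) : inv2 (stA2.mulVec x) = x := by
  rw [mv2]
  funext k
  fin_cases k <;>
    simp only [inv2, stcm0, stcm1, stcm2, stcm3, stcm4, stcm5, stcv0, stcv1, stcv2, stcv3,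
      stcv4, stcv5, stmk0, stmk1, stmk2, stmk3, stmk4, stmk5] <;>
    omega

lemma invId3 (x : Fin 6 → ℤ) : inv3 (stA3.mulVec x) = x := by
  rw [mv3]
  funext k
  fin_cases k <;>
    simp only [inv3, stcm0, stcm1, stcm2, stcm3, stcm4, stcm5, stcv0, stcv1, stcv2, stcv3,
      stcv4, stcv5, stmk0, stmk1, stmk2, stmk3, stmk4, stmk5] <;>
    omega

/- the decidable combinatorial facts about the tables -/
lemma fact12 : ∀ a b d : ZMod 5, spM (T12 a b d) (zc1 a b d) =
    zc2 (spM (T12 a b d) (zc1 a b d) 0) (spM (T12 a b d) (zc1 a b d) 1)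
        (spM (T12 a b d) (zc1 a b d) 2) := by decide
lemma fact21 : ∀ a b d : ZMod 5, spM (T21 a b d) (zc2 a b d) =
    zc1 (spM (T21 a b d) (zc2 a b d) 0) (spM (T21 a b d) (zc2 a b d) 1)
        (spM (T21 a b d) (zc2 a b d) 2) := by decide
lemma fact13 : ∀ a b d : ZMod 5, spM (T13 a b d) (zc1 a b d) =
    zc3 (spM (T13 a b d) (zc1 a b d) 0) (spM (T13 a b d) (zc1 a b d) 1)
        (spM (T13 a b d) (zc1 a b d) 2) := by decide
lemma fact31 : ∀ a b d : ZMod 5, spM (T31 a b d) (zc3 a b d) =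
    zc1 (spM (T31 a b d) (zc3 a b d) 0) (spM (T31 a b d) (zc3 a b d) 1)
        (spM (T31 a b d) (zc3 a b d) 2) := by decide
lemma fact12inv : ∀ a b d : ZMod 5, IsInv (T12 a b d)
    (T21 (spM (T12 a b d) (zc1 a b d) 0) (spM (T12 a b d) (zc1 a b d) 1)
         (spM (T12 a b d) (zc1 a b d) 2)) := by decide
lemma fact21inv : ∀ a b d : ZMod 5, IsInv (T21 a b d)
    (T12 (spM (T21 a b d) (zc2 a b d) 0) (spM (T21 a b d) (zc2 a b d) 1)
         (spM (T21 a b d) (zc2 a b d) 2)) := by decide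
lemma fact13inv : ∀ a b d : ZMod 5, IsInv (T13 a b d)
    (T31 (spM (T13 a b d) (zc1 a b d) 0) (spM (T13 a b d) (zc1 a b d) 1)
         (spM (T13 a b d) (zc1 a b d) 2)) := by decide
lemma fact31inv : ∀ a b d : ZMod 5, IsInv (T31 a b d)
    (T13 (spM (T31 a b d) (zc3 a b d) 0) (spM (T31 a b d) (zc3 a b d) 1)
         (spM (T31 a b d) (zc3 a b d) 2)) := by decide

end Aux

section Main

/-- the piecewise signed-permutation maps between the lattices -/
lemma paperA_m0 {h} : paperA ⟨0,h⟩ = stA1 := rfl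
lemma paperA_m1 {h} : paperA ⟨1,h⟩ = stA2 := rfl
lemma paperA_m2 {h} : paperA ⟨2,h⟩ = stA3 := rfl

def f12 (x : Fin 6 → ℤ) : Fin 6 → ℤ :=
  inv2 (spZ (T12 ((x 0 : ℤ) : ZMod 5) ((x 1 : ℤ) : ZMod 5) ((x 2 : ℤ) : ZMod 5)) (stA1.mulVec x))
def f21 (x : Fin 6 → ℤ) : Fin 6 → ℤ :=
  inv1 (spZ (T21 ((x 0 : ℤ) : ZMod 5) ((x 1 : ℤ) : ZMod 5) ((x 2 : ℤ) : ZMod 5)) (stA2.mulVec x))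
def f13 (x : Fin 6 → ℤ) : Fin 6 → ℤ :=
  inv3 (spZ (T13 ((x 0 : ℤ) : ZMod 5) ((x 1 : ℤ) : ZMod 5) ((x 2 : ℤ) : ZMod 5)) (stA1.mulVec x))
def f31 (x : Fin 6 → ℤ) : Fin 6 → ℤ :=
  inv1 (spZ (T31 ((x 0 : ℤ) : ZMod 5) ((x 1 : ℤ) : ZMod 5) ((x 2 : ℤ) : ZMod 5)) (stA3.mulVec x))

lemma castsp1 (e : SPerm) (x : Fin 6 → ℤ) (k : Fin 6) :
    ((spZ e (stA1.mulVec x) k : ℤ) : ZMod 5) =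
      spM e (zc1 ((x 0 : ℤ) : ZMod 5) ((x 1 : ℤ) : ZMod 5) ((x 2 : ℤ) : ZMod 5)) k := by
  rw [cast_spZ, castMv1]
lemma castsp2 (e : SPerm) (x : Fin 6 → ℤ) (k : Fin 6) :
    ((spZ e (stA2.mulVec x) k : ℤ) : ZMod 5) =
      spM e (zc2 ((x 0 : ℤ) : ZMod 5) ((x 1 : ℤ) : ZMod 5) ((x 2 : ℤ) : ZMod 5)) k := by
  rw [cast_spZ, castMv2]
lemma castsp3 (e : SPerm) (x : Fin 6 → ℤ) (k : Fin 6) :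
    ((spZ e (stA3.mulVec x) k : ℤ) : ZMod 5) =
      spM e (zc3 ((x 0 : ℤ) : ZMod 5) ((x 1 : ℤ) : ZMod 5) ((x 2 : ℤ) : ZMod 5)) k := by
  rw [cast_spZ, castMv3]

lemma L12 (x : Fin 6 → ℤ) : stA2.mulVec (f12 x) =
    spZ (T12 ((x 0 : ℤ) : ZMod 5) ((x 1 : ℤ) : ZMod 5) ((x 2 : ℤ) : ZMod 5)) (stA1.mulVec x) := by
  refine invSpec2 _ ?_
  funext k
  rw [castsp1, castsp1, castsp1, castsp1]
  exact congrFun (fact12 _ _ _) k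

lemma L21 (x : Fin 6 → ℤ) : stA1.mulVec (f21 x) =
    spZ (T21 ((x 0 : ℤ) : ZMod 5) ((x 1 : ℤ) : ZMod 5) ((x 2 : ℤ) : ZMod 5)) (stA2.mulVec x) := by
  refine invSpec1 _ ?_
  funext k
  rw [castsp2, castsp2, castsp2, castsp2]
  exact congrFun (fact21 _ _ _) k

lemma L13 (x : Fin 6 → ℤ) : stA3.mulVec (f13 x) =
    spZ (T13 ((x 0 : ℤ) : ZMod 5) ((x 1 : ℤ) : ZMod 5) ((x 2 : ℤ) : ZMod 5)) (stA1.mulVec x) := by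
  refine invSpec3 _ ?_
  funext k
  rw [castsp1, castsp1, castsp1, castsp1]
  exact congrFun (fact13 _ _ _) k

lemma L31 (x : Fin 6 → ℤ) : stA1.mulVec (f31 x) =
    spZ (T31 ((x 0 : ℤ) : ZMod 5) ((x 1 : ℤ) : ZMod 5) ((x 2 : ℤ) : ZMod 5)) (stA3.mulVec x) := by
  refine invSpec1 _ ?_
  funext k
  rw [castsp3, castsp3, castsp3, castsp3]
  exact congrFun (fact31 _ _ _) k

lemma norm12 (x : Fin 6 → ℤ) :
    (f12 x) ⬝ᵥ (stA2ᵀ * stA2).mulVec (f12 x) = x ⬝ᵥ (stA1ᵀ * stA1).mulVec x := by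
  rw [stquad, stquad, L12 x, spZ_norm (fact12inv _ _ _)]
lemma norm21 (x : Fin 6 → ℤ) :
    (f21 x) ⬝ᵥ (stA1ᵀ * stA1).mulVec (f21 x) = x ⬝ᵥ (stA2ᵀ * stA2).mulVec x := by
  rw [stquad, stquad, L21 x, spZ_norm (fact21inv _ _ _)]
lemma norm13 (x : Fin 6 → ℤ) :
    (f13 x) ⬝ᵥ (stA3ᵀ * stA3).mulVec (f13 x) = x ⬝ᵥ (stA1ᵀ * stA1).mulVec x := by
  rw [stquad, stquad, L13 x, spZ_norm (fact13inv _ _ _)]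
lemma norm31 (x : Fin 6 → ℤ) :
    (f31 x) ⬝ᵥ (stA1ᵀ * stA1).mulVec (f31 x) = x ⬝ᵥ (stA3ᵀ * stA3).mulVec x := by
  rw [stquad, stquad, L31 x, spZ_norm (fact31inv _ _ _)]

lemma comp2112 (x : Fin 6 → ℤ) : f21 (f12 x) = x := by
  show inv1 (spZ (T21 ((f12 x 0 : ℤ) : ZMod 5) ((f12 x 1 : ℤ) : ZMod 5) ((f12 x 2 : ℤ) : ZMod 5))
    (stA2.mulVec (f12 x))) = x
  have h0 : f12 x 0 = spZ (T12 ((x 0 : ℤ) : ZMod 5) ((x 1 : ℤ) : ZMod 5) ((x 2 : ℤ) : ZMod 5))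
    (stA1.mulVec x) 0 := rfl
  have h1 : f12 x 1 = spZ (T12 ((x 0 : ℤ) : ZMod 5) ((x 1 : ℤ) : ZMod 5) ((x 2 : ℤ) : ZMod 5))
    (stA1.mulVec x) 1 := rfl
  have h2 : f12 x 2 = spZ (T12 ((x 0 : ℤ) : ZMod 5) ((x 1 : ℤ) : ZMod 5) ((x 2 : ℤ) : ZMod 5))
    (stA1.mulVec x) 2 := rfl
  rw [L12 x, h0, h1, h2, castsp1, castsp1, castsp1, spZ_inv (fact12inv _ _ _), invId1]

lemma comp1221 (x : Fin 6 → ℤ) : f12 (f21 x) = x := by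
  show inv2 (spZ (T12 ((f21 x 0 : ℤ) : ZMod 5) ((f21 x 1 : ℤ) : ZMod 5) ((f21 x 2 : ℤ) : ZMod 5))
    (stA1.mulVec (f21 x))) = x
  have h0 : f21 x 0 = spZ (T21 ((x 0 : ℤ) : ZMod 5) ((x 1 : ℤ) : ZMod 5) ((x 2 : ℤ) : ZMod 5))
    (stA2.mulVec x) 0 := rfl
  have h1 : f21 x 1 = spZ (T21 ((x 0 : ℤ) : ZMod 5) ((x 1 : ℤ) : ZMod 5) ((x 2 : ℤ) : ZMod 5))
    (stA2.mulVec x) 1 := rfl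
  have h2 : f21 x 2 = spZ (T21 ((x 0 : ℤ) : ZMod 5) ((x 1 : ℤ) : ZMod 5) ((x 2 : ℤ) : ZMod 5))
    (stA2.mulVec x) 2 := rfl
  rw [L21 x, h0, h1, h2, castsp2, castsp2, castsp2, spZ_inv (fact21inv _ _ _), invId2]

lemma comp3113 (x : Fin 6 → ℤ) : f31 (f13 x) = x := by
  show inv1 (spZ (T31 ((f13 x 0 : ℤ) : ZMod 5) ((f13 x 1 : ℤ) : ZMod 5) ((f13 x 2 : ℤ) : ZMod 5))
    (stA3.mulVec (f13 x))) = x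
  have h0 : f13 x 0 = spZ (T13 ((x 0 : ℤ) : ZMod 5) ((x 1 : ℤ) : ZMod 5) ((x 2 : ℤ) : ZMod 5))
    (stA1.mulVec x) 0 := rfl
  have h1 : f13 x 1 = spZ (T13 ((x 0 : ℤ) : ZMod 5) ((x 1 : ℤ) : ZMod 5) ((x 2 : ℤ) : ZMod 5))
    (stA1.mulVec x) 1 := rfl
  have h2 : f13 x 2 = spZ (T13 ((x 0 : ℤ) : ZMod 5) ((x 1 : ℤ) : ZMod 5) ((x 2 : ℤ) : ZMod 5))
    (stA1.mulVec x) 2 := rfl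
  rw [L13 x, h0, h1, h2, castsp1, castsp1, castsp1, spZ_inv (fact13inv _ _ _), invId1]

lemma comp1331 (x : Fin 6 → ℤ) : f13 (f31 x) = x := by
  show inv3 (spZ (T13 ((f31 x 0 : ℤ) : ZMod 5) ((f31 x 1 : ℤ) : ZMod 5) ((f31 x 2 : ℤ) : ZMod 5))
    (stA1.mulVec (f31 x))) = x
  have h0 : f31 x 0 = spZ (T31 ((x 0 : ℤ) : ZMod 5) ((x 1 : ℤ) : ZMod 5) ((x 2 : ℤ) : ZMod 5))
    (stA3.mulVec x) 0 := rfl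
  have h1 : f31 x 1 = spZ (T31 ((x 0 : ℤ) : ZMod 5) ((x 1 : ℤ) : ZMod 5) ((x 2 : ℤ) : ZMod 5))
    (stA3.mulVec x) 1 := rfl
  have h2 : f31 x 2 = spZ (T31 ((x 0 : ℤ) : ZMod 5) ((x 1 : ℤ) : ZMod 5) ((x 2 : ℤ) : ZMod 5))
    (stA3.mulVec x) 2 := rfl
  rw [L31 x, h0, h1, h2, castsp3, castsp3, castsp3, spZ_inv (fact31inv _ _ _), invId3]

lemma cardEq12 (t : ℤ) :
    Nat.card {x : Fin 6 → ℤ | x ⬝ᵥ (stA1ᵀ * stA1).mulVec x = t} =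
    Nat.card {x : Fin 6 → ℤ | x ⬝ᵥ (stA2ᵀ * stA2).mulVec x = t} := by
  refine Nat.card_congr ?_
  refine ⟨fun p => ⟨f12 p.1, ?_⟩, fun p => ⟨f21 p.1, ?_⟩, fun p => Subtype.ext (comp2112 p.1),
    fun p => Subtype.ext (comp1221 p.1)⟩
  · have hp := p.2
    simp only [Set.mem_setOf_eq] at *
    rw [norm12]; exact hp
  · have hp := p.2
    simp only [Set.mem_setOf_eq] at *
    rw [norm21]; exact hp

lemma cardEq13 (t : ℤ) :
    Nat.card {x : Fin 6 → ℤ | x ⬝ᵥ (stA1ᵀ * stA1).mulVec x = t} =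
    Nat.card {x : Fin 6 → ℤ | x ⬝ᵥ (stA3ᵀ * stA3).mulVec x = t} := by
  refine Nat.card_congr ?_
  refine ⟨fun p => ⟨f13 p.1, ?_⟩, fun p => ⟨f31 p.1, ?_⟩, fun p => Subtype.ext (comp3113 p.1),
    fun p => Subtype.ext (comp1331 p.1)⟩
  · have hp := p.2
    simp only [Set.mem_setOf_eq] at *
    rw [norm13]; exact hp
  · have hp := p.2
    simp only [Set.mem_setOf_eq] at *
    rw [norm31]; exact hp

end Main

/-- with `Qᵢ = AᵢᵀAᵢ`, for every integer `t ≥ 0` and all `i, j`, the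
representation numbers satisfy `R(Qᵢ, t) = R(Qⱼ, t)`; i.e. the lattices `Aᵢℤ⁶` are
mutually isospectral. -/
theorem stmt_5 :
    ∀ t : ℤ, 0 ≤ t → ∀ i j : Fin 3,
      Nat.card {x : Fin 6 → ℤ | x ⬝ᵥ ((paperA i)ᵀ * paperA i).mulVec x = t} =
      Nat.card {x : Fin 6 → ℤ | x ⬝ᵥ ((paperA j)ᵀ * paperA j).mulVec x = t} := by
  intro t _ i j
  have h12 := cardEq12 t
  have h13 := cardEq13 t
  fin_cases i <;> fin_cases j <;>
    simp only [paperA_m0, paperA_m1, paperA_m2] <;>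
    omega
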